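/- Let A and B be n×n matrices over the nonnegative reals with λ > 0 and μ > 0, and suppose H(μ) ≤ λ. Then: (i) every positive vector x satisfies f_A(x) ≥ λ and f_B(x) ≥ μ; and (ii) there exists a positive vector x with f_A(x) = λ and f_B(x) = μ simultaneously. Consequently the Pareto frontier of the unconstrained bi-objective problem of minimizing (f_A(x), f_B(x)) over positive x is the single point (λ, μ). -/

import Mathlib

open scoped NNReal

/-- Square matrices over the max-times semifield of nonnegative reals. -/
abbrev TMat (n : ℕ) := Matrix (Fin n) (Fin n) ℝ≥0

/-- Tropical (max-times) matrix product. -/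
noncomputable def tmul {n : ℕ} (A B : TMat n) : TMat n :=
  fun i j => Finset.univ.sup fun k => A i k * B k j

/-- Tropical (max-times) matrix-vector product. -/
noncomputable def tmulVec {n : ℕ} (A : TMat n) (x : Fin n → ℝ≥0) : Fin n → ℝ≥0 :=
  fun i => Finset.univ.sup fun j => A i j * x j

/-- Tropical identity matrix. -/
noncomputable def tId (n : ℕ) : TMat n := fun i j => if i = j then 1 else 0

/-- Tropical matrix powers. -/
noncomputable def tpow {n : ℕ} (A : TMat n) : ℕ → TMat n
  | 0 => tId n
  | k + 1 => tmul A (tpow A k)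

/-- Tropical (entrywise max) matrix addition. -/
noncomputable def tadd {n : ℕ} (A B : TMat n) : TMat n := fun i j => A i j ⊔ B i j

/-- Entrywise scalar multiplication. -/
noncomputable def tsmul {n : ℕ} (a : ℝ≥0) (A : TMat n) : TMat n := fun i j => a * A i j

/-- Tropical trace: tr A = max_i a_{ii}. -/
noncomputable def ttr {n : ℕ} (A : TMat n) : ℝ≥0 := Finset.univ.sup fun i => A i i

/-- Tropical "determinant": Tr(A) = max_{k=1..n} tr(A^k). -/
noncomputable def tTr {n : ℕ} (A : TMat n) : ℝ≥0 :=
  (Finset.Icc 1 n).sup fun k => ttr (tpow A k)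

/-- Kleene star: entrywise max of A^0, ..., A^{n-1}. -/
noncomputable def tstar {n : ℕ} (A : TMat n) : TMat n :=
  fun i j => (Finset.range n).sup fun k => tpow A k i j

/-- Tropical product of a finite chain of matrices F 0 ⊗ F 1 ⊗ ⋯ ⊗ F (k-1). -/
noncomputable def tchain {n : ℕ} : (k : ℕ) → (Fin k → TMat n) → TMat n
  | 0, _ => tId n
  | k + 1, F => tmul (F 0) (tchain k fun t => F t.succ)

/-- Tuples of k nonnegative integers with sum m. -/
def tuples (k m : ℕ) : Finset (Fin k → Fin (m + 1)) :=
  Finset.univ.filter fun f => (∑ t, (f t : ℕ)) = m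

/-- Tuples of k integers from {0,1} with sum l. -/
def binTuples (k l : ℕ) : Finset (Fin k → Fin 2) :=
  Finset.univ.filter fun j => (∑ t, (j t : ℕ)) = l

/-- The objective f_M(x) = max_{i,j} m_{ij} x_j / x_i. -/
noncomputable def fobj {n : ℕ} (M : TMat n) (x : Fin n → ℝ≥0) : ℝ≥0 :=
  Finset.univ.sup fun p : Fin n × Fin n => M p.1 p.2 * x p.2 / x p.1

/-- Spectral radius: λ = max_{k=1..n} (tr(A^k))^{1/k}. -/
noncomputable def specRad {n : ℕ} (A : TMat n) : ℝ≥0 :=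
  (Finset.Icc 1 n).sup fun k => ttr (tpow A k) ^ ((1 : ℝ) / k)

/-- σ = max over k=1..n-1, m=1..n-k and tuples (i_1,…,i_k) with sum m of
    (tr(A^{i_1} C ⋯ A^{i_k} C))^{1/m}. -/
noncomputable def sigmaC {n : ℕ} (A C : TMat n) : ℝ≥0 :=
  (Finset.Icc 1 (n - 1)).sup fun k =>
    (Finset.Icc 1 (n - k)).sup fun m =>
      (tuples k m).sup fun f =>
        ttr (tchain k fun t => tmul (tpow A (f t : ℕ)) C) ^ ((1 : ℝ) / m)

/-- r_{k,l,m} = max over tuples (i_1,…,i_k) with sum m and (j_1,…,j_k) ∈ {0,1}^k with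
    sum l of tr(A^{i_1} B^{j_1} C^{1-j_1} ⋯ A^{i_k} B^{j_k} C^{1-j_k}). -/
noncomputable def rklm {n : ℕ} (A B C : TMat n) (k l m : ℕ) : ℝ≥0 :=
  (tuples k m).sup fun f =>
    (binTuples k l).sup fun j =>
      ttr (tchain k fun t =>
        tmul (tpow A (f t : ℕ)) (tmul (tpow B (j t : ℕ)) (tpow C (1 - (j t : ℕ)))))

/-- G(s) = max_{k,m,l} r_{k,l,m}^{1/l} s^{-m/l}. -/
noncomputable def Gfun {n : ℕ} (A B C : TMat n) (s : ℝ≥0) : ℝ≥0 :=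
  (Finset.Icc 1 (n - 1)).sup fun k =>
    (Finset.Icc 1 (n - k)).sup fun m =>
      (Finset.Icc 1 k).sup fun l =>
        rklm A B C k l m ^ ((1 : ℝ) / l) * s ^ (-(m : ℝ) / l)

/-- H(t) = max_{k,m,l} r_{k,l,m}^{1/m} t^{-l/m}. -/
noncomputable def Hfun {n : ℕ} (A B C : TMat n) (t : ℝ≥0) : ℝ≥0 :=
  (Finset.Icc 1 (n - 1)).sup fun k =>
    (Finset.Icc 1 (n - k)).sup fun m =>
      (Finset.Icc 1 k).sup fun l =>
        rklm A B C k l m ^ ((1 : ℝ) / m) * t ^ (-(l : ℝ) / m)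

/-- Unconstrained r_{k,m} = max over tuples (i_1,…,i_k) with sum m of
    tr(A^{i_1} B ⋯ A^{i_k} B). -/
noncomputable def rkm {n : ℕ} (A B : TMat n) (k m : ℕ) : ℝ≥0 :=
  (tuples k m).sup fun f => ttr (tchain k fun t => tmul (tpow A (f t : ℕ)) B)

/-- Unconstrained G(s) = max_{k,m} r_{k,m}^{1/k} s^{-m/k}. -/
noncomputable def Gfun0 {n : ℕ} (A B : TMat n) (s : ℝ≥0) : ℝ≥0 :=
  (Finset.Icc 1 (n - 1)).sup fun k =>
    (Finset.Icc 1 (n - k)).sup fun m =>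
      rkm A B k m ^ ((1 : ℝ) / k) * s ^ (-(m : ℝ) / k)

/-- Unconstrained H(t) = max_{k,m} r_{k,m}^{1/m} t^{-k/m}. -/
noncomputable def Hfun0 {n : ℕ} (A B : TMat n) (t : ℝ≥0) : ℝ≥0 :=
  (Finset.Icc 1 (n - 1)).sup fun k =>
    (Finset.Icc 1 (n - k)).sup fun m =>
      rkm A B k m ^ ((1 : ℝ) / m) * t ^ (-(k : ℝ) / m)

/-- Pareto-minimal points of a set V ⊆ ℝ≥0 × ℝ≥0. -/
def ParetoMin (V : Set (ℝ≥0 × ℝ≥0)) (p : ℝ≥0 × ℝ≥0) : Prop :=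
  p ∈ V ∧ ¬∃ q ∈ V, q.1 ≤ p.1 ∧ q.2 ≤ p.2 ∧ q ≠ p

/-- The set of objective values over positive vectors of the unconstrained problem. -/
def V0 {n : ℕ} (A B : TMat n) : Set (ℝ≥0 × ℝ≥0) :=
  {p | ∃ x : Fin n → ℝ≥0, (∀ i, 0 < x i) ∧ p = (fobj A x, fobj B x)}

section Aux
variable {n : ℕ}

lemma entry_mul_le (M N : TMat n) (i k j : Fin n) : M i k * N k j ≤ tmul M N i j :=
  Finset.le_sup (f := fun k => M i k * N k j) (Finset.mem_univ k)

lemma tmul_le_iff {M N : TMat n} {i j : Fin n} {c : ℝ≥0} :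
    tmul M N i j ≤ c ↔ ∀ k, M i k * N k j ≤ c := by
  simp [tmul, Finset.sup_le_iff]

lemma tmul_assoc (M N P : TMat n) : tmul (tmul M N) P = tmul M (tmul N P) := by
  funext i j
  apply le_antisymm
  · rw [tmul_le_iff]
    intro k
    rw [tmul, NNReal.finset_sup_mul]
    apply Finset.sup_le
    intro l _
    calc M i l * N l k * P k j = M i l * (N l k * P k j) := by ring
    _ ≤ M i l * tmul N P l j := by
        exact mul_le_mul_right (entry_mul_le _ _ _ _ _) _
    _ ≤ tmul M (tmul N P) i j := entry_mul_le _ _ _ _ _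
  · rw [tmul_le_iff]
    intro k
    have hd : tmul N P k j = Finset.univ.sup (fun l => N k l * P l j) := rfl
    rw [hd, NNReal.mul_finset_sup]
    apply Finset.sup_le
    intro l _
    calc M i k * (N k l * P l j) = M i k * N k l * P l j := by ring
    _ ≤ tmul M N i l * P l j := by
        exact mul_le_mul_left (entry_mul_le _ _ _ _ _) _
    _ ≤ tmul (tmul M N) P i j := entry_mul_le _ _ _ _ _

lemma tmul_tId (M : TMat n) : tmul M (tId n) = M := by
  funext i j
  apply le_antisymm
  · rw [tmul_le_iff]
    intro k
    by_cases h : k = j <;> simp [tId, h]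
  · simpa [tId] using entry_mul_le M (tId n) i j j

lemma tId_tmul (M : TMat n) : tmul (tId n) M = M := by
  funext i j
  apply le_antisymm
  · rw [tmul_le_iff]
    intro k
    by_cases h : i = k <;> simp [tId, h]
  · simpa [tId] using entry_mul_le (tId n) M i i j

end Aux
section Aux2
variable {n : ℕ}

lemma ttr_tmul_comm (M N : TMat n) : ttr (tmul M N) = ttr (tmul N M) := by
  have key : ∀ P Q : TMat n, ttr (tmul P Q) ≤ ttr (tmul Q P) := by
    intro P Q
    apply Finset.sup_le
    intro i _
    rw [tmul_le_iff]
    intro k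
    calc P i k * Q k i = Q k i * P i k := mul_comm _ _
    _ ≤ tmul Q P k k := entry_mul_le _ _ _ _ _
    _ ≤ ttr (tmul Q P) := Finset.le_sup (f := fun i => tmul Q P i i) (Finset.mem_univ k)
  exact le_antisymm (key M N) (key N M)

lemma tsmul_tmul (a : ℝ≥0) (M N : TMat n) : tmul (tsmul a M) N = tsmul a (tmul M N) := by
  funext i j
  simp only [tsmul, tmul, NNReal.mul_finset_sup, mul_assoc]

lemma tmul_tsmul (a : ℝ≥0) (M N : TMat n) : tmul M (tsmul a N) = tsmul a (tmul M N) := by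
  funext i j
  simp only [tsmul, tmul, NNReal.mul_finset_sup]
  congr 1
  funext k
  ring

lemma tsmul_one (M : TMat n) : tsmul 1 M = M := by
  funext i j; simp [tsmul]

lemma tsmul_tsmul (a b : ℝ≥0) (M : TMat n) : tsmul a (tsmul b M) = tsmul (a * b) M := by
  funext i j; simp [tsmul, mul_assoc]

lemma ttr_tsmul (a : ℝ≥0) (M : TMat n) : ttr (tsmul a M) = a * ttr M := by
  simp [ttr, tsmul, NNReal.mul_finset_sup]

lemma tpow_tsmul (a : ℝ≥0) (M : TMat n) : ∀ k, tpow (tsmul a M) k = tsmul (a ^ k) (tpow M k)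
  | 0 => by simp [tpow, tsmul_one]
  | k + 1 => by
      rw [tpow, tpow, tpow_tsmul a M k, tsmul_tmul, tmul_tsmul, tsmul_tsmul, pow_succ]
      ring_nf

/-- chain of a list of matrices -/
noncomputable def chainL : List (TMat n) → TMat n
  | [] => tId n
  | M :: l => tmul M (chainL l)

lemma chainL_append (u v : List (TMat n)) :
    chainL (u ++ v) = tmul (chainL u) (chainL v) := by
  induction u with
  | nil => simp [chainL, tId_tmul]
  | cons x u ih => simp [chainL, ih, tmul_assoc]

lemma tchain_eq_chainL : ∀ (k : ℕ) (F : Fin k → TMat n), tchain k F = chainL (List.ofFn F)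
  | 0, F => by simp [tchain, chainL]
  | k + 1, F => by
      rw [List.ofFn_succ, tchain]
      simp [chainL, tchain_eq_chainL k]

lemma chainL_replicate (M : TMat n) : ∀ k, chainL (List.replicate k M) = tpow M k
  | 0 => rfl
  | k + 1 => by rw [List.replicate_succ, chainL, chainL_replicate M k, tpow]

lemma tchain_tsmul : ∀ (k : ℕ) (c : Fin k → ℝ≥0) (F : Fin k → TMat n),
    tchain k (fun t => tsmul (c t) (F t)) = tsmul (∏ t, c t) (tchain k F)
  | 0, c, F => by simp [tchain, tsmul_one]
  | k + 1, c, F => by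
      rw [tchain, tchain]
      rw [tchain_tsmul k (fun t => c t.succ) (fun t => F t.succ)]
      rw [tsmul_tmul, tmul_tsmul, tsmul_tsmul, Fin.prod_univ_succ]

lemma ttr_chainL_rotate (u v : List (TMat n)) :
    ttr (chainL (u ++ v)) = ttr (chainL (v ++ u)) := by
  rw [chainL_append, chainL_append, ttr_tmul_comm]

end Aux2
section Aux3
variable {n : ℕ}

lemma count_pos_of_getLast? {L : List Bool} (h : L.getLast? = some true) :
    0 < L.count true := by
  obtain ⟨hne, hx⟩ := List.mem_getLast?_eq_getLast (x := true) (by rw [h]; rfl)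
  rw [List.count_pos_iff]
  rw [hx]
  exact List.getLast_mem hne

lemma parse (M N : TMat n) : ∀ (L : List Bool) (j : ℕ), L.count true = j →
    L.getLast? = some true →
    ∃ f : Fin j → ℕ, (∑ t, f t) = L.count false ∧
      chainL (L.map (fun b => if b then N else M)) =
        tchain j (fun t => tmul (tpow M (f t)) N) := by
  intro L
  induction L with
  | nil => intro j hj hlast; simp at hlast
  | cons b L ih =>
    intro j hj hlast
    cases L with
    | nil =>
      have hb : b = true := by simpa using hlast
      subst hb
      have hj1 : j = 1 := by simpa using hj.symm
      subst hj1
      refine ⟨fun _ => 0, by simp, ?_⟩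
      show tmul N (chainL []) = tmul (tmul (tpow M 0) N) (tchain 0 fun t => _)
      simp only [chainL, tchain, tpow, tId_tmul, tmul_tId]
    | cons c L' =>
      have hlast' : (c :: L').getLast? = some true := by
        rwa [List.getLast?_cons_cons] at hlast
      cases b with
      | false =>
        have hjc : (c :: L').count true = j := by
          simp [List.count_cons] at hj ⊢
          omega
        obtain ⟨j', rfl⟩ : ∃ j', j = j' + 1 :=
          ⟨j - 1, by have := count_pos_of_getLast? hlast'; omega⟩
        obtain ⟨f, hsum, hchain⟩ := ih _ hjc hlast'
        rw [Fin.sum_univ_succ] at hsum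
        refine ⟨fun t => if t = 0 then f 0 + 1 else f t, ?_, ?_⟩
        · rw [Fin.sum_univ_succ]
          have h2 : ∑ t : Fin j', (if (Fin.succ t : Fin (j'+1)) = 0 then f 0 + 1 else f t.succ)
              = ∑ t : Fin j', f t.succ :=
            Finset.sum_congr rfl (fun t _ => if_neg (Fin.succ_ne_zero t))
          rw [h2, if_pos rfl]
          simp [List.count_cons] at hsum ⊢
          omega
        · show tmul M (chainL (List.map _ (c :: L'))) = _
          rw [hchain]
          show tmul M (tmul (tmul (tpow M (f 0)) N)
            (tchain j' fun t => tmul (tpow M (f t.succ)) N)) = _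
          rw [← tmul_assoc, ← tmul_assoc]
          show _ = tmul (tmul (tpow M (f 0 + 1)) N) (tchain j' fun t =>
            tmul (tpow M (if (Fin.succ t : Fin (j'+1)) = 0 then f 0 + 1 else f t.succ)) N)
          have h1 : tmul M (tpow M (f 0)) = tpow M (f 0 + 1) := rfl
          have h2 : (fun t : Fin j' =>
              tmul (tpow M (if (Fin.succ t : Fin (j'+1)) = 0 then f 0 + 1 else f t.succ)) N) =
              fun t => tmul (tpow M (f t.succ)) N := by
            funext t; rw [if_neg (Fin.succ_ne_zero t)]
          rw [h1, h2]
      | true =>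
        obtain ⟨j₁, rfl⟩ : ∃ j₁, j = j₁ + 1 :=
          ⟨(c :: L').count true, by simp [List.count_cons] at hj ⊢; omega⟩
        have hjc : (c :: L').count true = j₁ := by
          simp [List.count_cons] at hj ⊢
          omega
        obtain ⟨f₁, hsum, hchain⟩ := ih _ hjc hlast'
        refine ⟨Fin.cons 0 f₁, ?_, ?_⟩
        · rw [Fin.sum_univ_succ]
          simp only [Fin.cons_zero, Fin.cons_succ]
          simp [List.count_cons] at hsum ⊢
          omega
        · show tmul N (chainL (List.map _ (c :: L'))) = _
          rw [hchain]
          show _ = tmul (tmul (tpow M ((Fin.cons 0 f₁ : Fin (j₁+1) → ℕ) 0)) N)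
            (tchain j₁ fun t => tmul (tpow M ((Fin.cons 0 f₁ : Fin (j₁+1) → ℕ) t.succ)) N)
          simp only [Fin.cons_zero, Fin.cons_succ]
          show tmul N _ = tmul (tmul (tId n) N) _
          rw [tId_tmul]

lemma expand (M N : TMat n) : ∀ (k : ℕ) (i j : Fin n),
    tpow (tadd M N) k i j ≤
      (Finset.univ : Finset (Fin k → Bool)).sup
        (fun w => tchain k (fun t => if w t then N else M) i j) := by
  intro k
  induction k with
  | zero =>
    intro i j
    exact Finset.le_sup (f := fun w : Fin 0 → Bool =>
      tchain 0 (fun t => if w t then N else M) i j) (Finset.mem_univ (fun t => t.elim0))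
  | succ k ih =>
    intro i j
    rw [show tpow (tadd M N) (k+1) = tmul (tadd M N) (tpow (tadd M N) k) from rfl]
    rw [tmul_le_iff]
    intro l
    have key : ∀ (b : Bool),
        (if b then N else M) i l * tpow (tadd M N) k l j ≤
          (Finset.univ : Finset (Fin (k+1) → Bool)).sup
            (fun w => tchain (k+1) (fun t => if w t then N else M) i j) := by
      intro b
      calc (if b then N else M) i l * tpow (tadd M N) k l j
          ≤ (if b then N else M) i l * (Finset.univ : Finset (Fin k → Bool)).sup
              (fun w => tchain k (fun t => if w t then N else M) l j) :=
            mul_le_mul_right (ih l j) _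
        _ = (Finset.univ : Finset (Fin k → Bool)).sup
              (fun w => (if b then N else M) i l *
                tchain k (fun t => if w t then N else M) l j) := by
            rw [NNReal.mul_finset_sup]
        _ ≤ _ := by
            apply Finset.sup_le
            intro w _
            have hform : tchain (k+1) (fun t => if (Fin.cons b w : Fin (k+1) → Bool) t then N else M)
                = tmul (if b then N else M)
                    (tchain k (fun t => if w t then N else M)) := by
              have ht : (fun t : Fin k => if (Fin.cons b w : Fin (k+1) → Bool) t.succ then N else M)
                  = (fun t => if w t then N else M) := by
                funext t; rw [Fin.cons_succ]
              have h0 : (Fin.cons b w : Fin (k+1) → Bool) 0 = b := Fin.cons_zero _ _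
              rw [tchain, ht, h0]
            calc (if b then N else M) i l * tchain k (fun t => if w t then N else M) l j
                ≤ tmul (if b then N else M) (tchain k (fun t => if w t then N else M)) i j :=
                  entry_mul_le _ _ _ _ _
              _ = tchain (k+1) (fun t => if (Fin.cons b w : Fin (k+1) → Bool) t then N else M) i j := by
                  rw [hform]
              _ ≤ _ := Finset.le_sup (f := fun w : Fin (k+1) → Bool =>
                  tchain (k+1) (fun t => if w t then N else M) i j) (Finset.mem_univ _)
    have hadd : tadd M N i l = (M i l) ⊔ (N i l) := rfl
    calc tadd M N i l * tpow (tadd M N) k l j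
        = (M i l * tpow (tadd M N) k l j) ⊔ (N i l * tpow (tadd M N) k l j) := by
          rw [hadd]; exact max_mul_of_nonneg _ _ zero_le
      _ ≤ _ := by
          apply max_le
          · simpa using key false
          · simpa using key true

end Aux3
section Aux4
variable {n : ℕ}

lemma count_true_false (L : List Bool) : L.count true + L.count false = L.length := by
  induction L with
  | nil => rfl
  | cons b L ih => cases b <;> simp [List.count_cons] <;> omega

lemma wordTrace (A B : TMat n) (lam mu : ℝ≥0) (hlam : lam ≠ 0) (hmu : mu ≠ 0)
    (hA : ∀ k, 1 ≤ k → k ≤ n → ttr (tpow A k) ≤ lam ^ k)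
    (hB : ∀ k, 1 ≤ k → k ≤ n → ttr (tpow B k) ≤ mu ^ k)
    (hr : ∀ j m, 1 ≤ j → 1 ≤ m → j + m ≤ n → rkm A B j m ≤ lam ^ m * mu ^ j) :
    ∀ L : List Bool, 1 ≤ L.length → L.length ≤ n →
      ttr (chainL (L.map (fun b => if b then tsmul mu⁻¹ B else tsmul lam⁻¹ A))) ≤ 1 := by
  intro L hL1 hLn
  set Am := tsmul lam⁻¹ A with hAm
  set Bm := tsmul mu⁻¹ B with hBm
  set mat : Bool → TMat n := fun b => if b then Bm else Am with hmat
  set j := L.count true with hj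
  set m := L.count false with hm
  have hjm : j + m = L.length := count_true_false L
  rcases Nat.eq_zero_or_pos j with hj0 | hjpos
  · -- all false
    have hrep : L = List.replicate L.length false := by
      apply List.eq_replicate_of_mem
      intro b hb
      cases b
      · rfl
      · exact absurd hb (List.count_eq_zero.mp hj0)
    rw [hrep, List.map_replicate, chainL_replicate]
    have hmf : mat false = Am := if_neg (by simp)
    rw [hmf, hAm, tpow_tsmul, ttr_tsmul]
    calc lam⁻¹ ^ L.length * ttr (tpow A L.length)
        ≤ lam⁻¹ ^ L.length * lam ^ L.length :=
          mul_le_mul_right (hA L.length hL1 hLn) _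
      _ = (lam⁻¹ * lam) ^ L.length := (mul_pow _ _ _).symm
      _ = 1 := by rw [inv_mul_cancel₀ hlam, one_pow]
  rcases Nat.eq_zero_or_pos m with hm0 | hmpos
  · -- all true
    have hrep : L = List.replicate L.length true := by
      apply List.eq_replicate_of_mem
      intro b hb
      cases b
      · exact absurd hb (List.count_eq_zero.mp hm0)
      · rfl
    rw [hrep, List.map_replicate, chainL_replicate]
    have hmt : mat true = Bm := if_pos rfl
    rw [hmt, hBm, tpow_tsmul, ttr_tsmul]
    calc mu⁻¹ ^ L.length * ttr (tpow B L.length)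
        ≤ mu⁻¹ ^ L.length * mu ^ L.length :=
          mul_le_mul_right (hB L.length hL1 hLn) _
      _ = (mu⁻¹ * mu) ^ L.length := (mul_pow _ _ _).symm
      _ = 1 := by rw [inv_mul_cancel₀ hmu, one_pow]
  -- mixed case
  have htrue : true ∈ L := by
    rw [← List.count_pos_iff]
    exact hjpos
  obtain ⟨s, t, hst⟩ := List.append_of_mem htrue
  set L'' := t ++ (s ++ [true]) with hL''
  have hrot : ttr (chainL (L.map mat)) = ttr (chainL (L''.map mat)) := by
    rw [hst]
    have : s ++ true :: t = (s ++ [true]) ++ t := by simp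
    rw [this, List.map_append, ttr_chainL_rotate, ← List.map_append]
  have hcount_t : L''.count true = j := by
    rw [hj, hst, hL'']
    simp [List.count_append, List.count_cons]
    omega
  have hcount_f : L''.count false = m := by
    rw [hm, hst, hL'']
    simp [List.count_append, List.count_cons]
    omega
  have hlast : L''.getLast? = some true := by
    rw [hL'', show t ++ (s ++ [true]) = (t ++ s) ++ [true] by simp]
    exact List.getLast?_concat
  obtain ⟨f, hsum, hchain⟩ := parse Am Bm L'' j hcount_t hlast
  rw [hrot, hchain]
  rw [hcount_f] at hsum
  -- pull out scalars
  have hblock : (fun t : Fin j => tmul (tpow Am (f t)) Bm) =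
      fun t : Fin j => tsmul (lam⁻¹ ^ (f t) * mu⁻¹) (tmul (tpow A (f t)) B) := by
    funext t
    rw [hAm, hBm, tpow_tsmul, tsmul_tmul, tmul_tsmul, tsmul_tsmul]
  rw [hblock, tchain_tsmul, ttr_tsmul]
  have hprod : (∏ t : Fin j, lam⁻¹ ^ (f t) * mu⁻¹) = lam⁻¹ ^ m * mu⁻¹ ^ j := by
    rw [Finset.prod_mul_distrib, Finset.prod_pow_eq_pow_sum, hsum, Finset.prod_const,
      Finset.card_univ, Fintype.card_fin]
  rw [hprod]
  -- bound the block chain trace by rkm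
  have hmem : ∀ t : Fin j, f t < m + 1 := by
    intro t
    have : f t ≤ ∑ u, f u := Finset.single_le_sum (fun u _ => Nat.zero_le _) (Finset.mem_univ t)
    omega
  have hfm : (fun t : Fin j => (⟨f t, hmem t⟩ : Fin (m+1))) ∈ tuples j m := by
    rw [tuples, Finset.mem_filter]
    exact ⟨Finset.mem_univ _, by simpa using hsum⟩
  have hblk : ttr (tchain j fun t => tmul (tpow A (f t)) B) ≤ rkm A B j m := by
    have := Finset.le_sup (f := fun g : Fin j → Fin (m+1) =>
      ttr (tchain j fun t => tmul (tpow A ((g t : ℕ))) B)) hfm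
    exact this
  have hrange : j + m ≤ n := hjm ▸ hLn
  calc lam⁻¹ ^ m * mu⁻¹ ^ j * ttr (tchain j fun t => tmul (tpow A (f t)) B)
      ≤ lam⁻¹ ^ m * mu⁻¹ ^ j * (lam ^ m * mu ^ j) :=
        mul_le_mul_right (hblk.trans (hr j m hjpos hmpos hrange)) _
    _ = (lam⁻¹ * lam) ^ m * ((mu⁻¹ * mu) ^ j) := by
        rw [mul_pow, mul_pow]; ring
    _ = 1 := by rw [inv_mul_cancel₀ hlam, inv_mul_cancel₀ hmu, one_pow, one_pow, one_mul]

lemma traceC_le_one (A B : TMat n) (lam mu : ℝ≥0) (hlam : lam ≠ 0) (hmu : mu ≠ 0)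
    (hA : ∀ k, 1 ≤ k → k ≤ n → ttr (tpow A k) ≤ lam ^ k)
    (hB : ∀ k, 1 ≤ k → k ≤ n → ttr (tpow B k) ≤ mu ^ k)
    (hr : ∀ j m, 1 ≤ j → 1 ≤ m → j + m ≤ n → rkm A B j m ≤ lam ^ m * mu ^ j) :
    ∀ k, 1 ≤ k → k ≤ n →
      ttr (tpow (tadd (tsmul lam⁻¹ A) (tsmul mu⁻¹ B)) k) ≤ 1 := by
  intro k hk1 hkn
  apply Finset.sup_le
  intro i _
  calc tpow (tadd (tsmul lam⁻¹ A) (tsmul mu⁻¹ B)) k i i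
      ≤ (Finset.univ : Finset (Fin k → Bool)).sup
          (fun w => tchain k (fun t => if w t then tsmul mu⁻¹ B else tsmul lam⁻¹ A) i i) :=
        expand _ _ k i i
    _ ≤ 1 := by
        apply Finset.sup_le
        intro w _
        have hofn : tchain k (fun t => if w t then tsmul mu⁻¹ B else tsmul lam⁻¹ A)
            = chainL ((List.ofFn w).map (fun b => if b then tsmul mu⁻¹ B else tsmul lam⁻¹ A)) := by
          rw [tchain_eq_chainL, List.map_ofFn]
          rfl
        rw [hofn]
        set ML := (List.ofFn w).map (fun b => if b then tsmul mu⁻¹ B else tsmul lam⁻¹ A) with hML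
        calc chainL ML i i
            ≤ ttr (chainL ML) :=
              Finset.le_sup (f := fun i => chainL ML i i) (Finset.mem_univ i)
          _ ≤ 1 := wordTrace A B lam mu hlam hmu hA hB hr _ (by simpa using hk1) (by simpa using hkn)

end Aux4
section Aux5
variable {n : ℕ}

/-- weight of a path given by its list of nodes -/
noncomputable def wgt (C : TMat n) : List (Fin n) → ℝ≥0
  | x :: y :: l => C x y * wgt C (y :: l)
  | _ => 1

lemma wgt_le_tpow (C : TMat n) : ∀ (l : List (Fin n)) (i j : Fin n),
    (i :: l).getLast? = some j → wgt C (i :: l) ≤ tpow C l.length i j := by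
  intro l
  induction l with
  | nil =>
    intro i j hlast
    have : i = j := by simpa using hlast
    subst this
    simp [wgt, tpow, tId]
  | cons y l ih =>
    intro i j hlast
    rw [List.getLast?_cons_cons] at hlast
    calc wgt C (i :: y :: l) = C i y * wgt C (y :: l) := rfl
      _ ≤ C i y * tpow C l.length y j := mul_le_mul_right (ih y j hlast) _
      _ ≤ tpow C (l.length + 1) i j := entry_mul_le _ _ _ _ _

lemma exists_path (C : TMat n) (hn : 0 < n) : ∀ (K : ℕ) (i j : Fin n),
    tpow C K i j = 0 ∨ ∃ l : List (Fin n), l.length = K ∧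
      (i :: l).getLast? = some j ∧ tpow C K i j ≤ wgt C (i :: l) := by
  intro K
  induction K with
  | zero =>
    intro i j
    by_cases h : i = j
    · subst h
      right
      exact ⟨[], rfl, rfl, by simp [tpow, tId, wgt]⟩
    · left; simp [tpow, tId, h]
  | succ K ih =>
    intro i j
    have _ : Nonempty (Fin n) := Fin.pos_iff_nonempty.mp hn
    have hne : (Finset.univ : Finset (Fin n)).Nonempty := Finset.univ_nonempty
    obtain ⟨t, _, ht⟩ := Finset.exists_mem_eq_sup Finset.univ hne
      (fun t => C i t * tpow C K t j)
    have hval : tpow C (K+1) i j = C i t * tpow C K t j := ht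
    rcases ih t j with h0 | ⟨l, hlen, hlast, hle⟩
    · left; rw [hval, h0, mul_zero]
    · right
      refine ⟨t :: l, by simp [hlen], ?_, ?_⟩
      · rw [List.getLast?_cons_cons]; exact hlast
      · calc tpow C (K+1) i j = C i t * tpow C K t j := hval
          _ ≤ C i t * wgt C (t :: l) := mul_le_mul_right hle _
          _ = wgt C (i :: t :: l) := rfl

lemma wgt_split (C : TMat n) : ∀ (u : List (Fin n)) (a : Fin n) (v : List (Fin n)),
    wgt C (u ++ a :: v) = wgt C (u ++ [a]) * wgt C (a :: v) := by
  intro u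
  induction u with
  | nil => intro a v; simp [wgt]
  | cons x u ih =>
    intro a v
    cases u with
    | nil =>
      show wgt C (x :: a :: v) = wgt C (x :: [a]) * wgt C (a :: v)
      show C x a * wgt C (a :: v) = (C x a * wgt C [a]) * wgt C (a :: v)
      simp [wgt]
    | cons y u' =>
      show wgt C (x :: (y :: u') ++ a :: v) = wgt C (x :: (y :: u') ++ [a]) * wgt C (a :: v)
      have h1 : wgt C (x :: (y :: u') ++ a :: v) = C x y * wgt C ((y :: u') ++ a :: v) := rfl
      have h2 : wgt C (x :: (y :: u') ++ [a]) = C x y * wgt C ((y :: u') ++ [a]) := rfl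
      rw [h1, h2, ih a v, mul_assoc]

lemma exists_dup {α : Type*} [DecidableEq α] : ∀ (l : List α), ¬l.Nodup →
    ∃ (a : α) (u v w : List α), l = u ++ (a :: (v ++ (a :: w))) := by
  intro l
  induction l with
  | nil => intro h; exact absurd List.nodup_nil h
  | cons x l ih =>
    intro h
    rw [List.nodup_cons] at h
    push_neg at h
    by_cases hx : x ∈ l
    · obtain ⟨s, t, hst⟩ := List.append_of_mem hx
      exact ⟨x, [], s, t, by rw [hst]; rfl⟩
    · obtain ⟨a, u, v, w, huv⟩ := ih (h hx)
      exact ⟨a, x :: u, v, w, by rw [huv]; rfl⟩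

lemma wgt_head {C : TMat n} : ∀ l : List (Fin n), wgt C l ≤ 1 ∨ ∃ x l', l = x :: l' := by
  intro l
  cases l with
  | nil => left; simp [wgt]
  | cons x l' => right; exact ⟨x, l', rfl⟩

/-- Cycle removal: if all traces up to n are ≤ 1, long paths are dominated by shorter ones. -/
lemma collapse (C : TMat n) (hn : 0 < n)
    (htr : ∀ k, 1 ≤ k → k ≤ n → ttr (tpow C k) ≤ 1) :
    ∀ (K : ℕ) (i j : Fin n), tpow C K i j ≤ (Finset.range n).sup fun k => tpow C k i j := by
  intro K
  induction K using Nat.strong_induction_on with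
  | _ K ih =>
  intro i j
  by_cases hK : K < n
  · exact Finset.le_sup (f := fun k => tpow C k i j) (Finset.mem_range.mpr hK)
  push_neg at hK
  rcases exists_path C hn K i j with h0 | ⟨l, hlen, hlast, hle⟩
  · rw [h0]; exact zero_le
  -- the node list
  set P := i :: l with hP
  have hPlen : P.length = K + 1 := by simp [hP, hlen]
  -- find duplicate in the first n+1 nodes
  have htake : ¬(P.take (n+1)).Nodup := by
    intro hnd
    have hlen1 : (P.take (n+1)).length = n + 1 := by
      rw [List.length_take, hPlen]
      omega
    have := List.Nodup.length_le_card hnd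
    rw [hlen1] at this
    simp at this
  obtain ⟨a, u, v, w, hdec⟩ := exists_dup _ htake
  have hPdec : P = u ++ (a :: (v ++ (a :: (w ++ P.drop (n+1))))) := by
    conv_lhs => rw [← List.take_append_drop (n+1) P]
    rw [hdec]
    simp
  set w' := w ++ P.drop (n+1) with hw'
  -- cycle length bound
  have hcyclen : v.length + 1 ≤ n := by
    have : (P.take (n+1)).length ≤ n + 1 := by
      rw [List.length_take]; omega
    rw [hdec] at this
    simp at this
    omega
  -- split the weight
  have hsplit1 : wgt C P = wgt C (u ++ [a]) * wgt C (a :: (v ++ (a :: w'))) := by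
    rw [hPdec]
    exact wgt_split C u a (v ++ (a :: w'))
  have hsplit2 : wgt C (a :: (v ++ (a :: w'))) = wgt C ((a :: v) ++ [a]) * wgt C (a :: w') := by
    exact wgt_split C (a :: v) a w'
  -- the cycle has weight ≤ 1
  have hcyc : wgt C ((a :: v) ++ [a]) ≤ 1 := by
    have h1 : ((a :: (v ++ [a])).getLast? = some a) := by
      rw [show a :: (v ++ [a]) = (a :: v) ++ [a] by rfl]
      exact List.getLast?_concat
    have h2 := wgt_le_tpow C (v ++ [a]) a a (by simpa using h1)
    have h3 : (v ++ [a]).length = v.length + 1 := by simp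
    rw [h3] at h2
    calc wgt C ((a :: v) ++ [a]) = wgt C (a :: (v ++ [a])) := by simp
      _ ≤ tpow C (v.length + 1) a a := h2
      _ ≤ ttr (tpow C (v.length + 1)) :=
          Finset.le_sup (f := fun i => tpow C (v.length + 1) i i) (Finset.mem_univ a)
      _ ≤ 1 := htr _ (by omega) hcyclen
  -- the shorter path
  set P' := u ++ (a :: w') with hP'
  have hwgt' : wgt C P ≤ wgt C P' := by
    rw [hsplit1, hsplit2, hP', wgt_split C u a w']
    calc wgt C (u ++ [a]) * (wgt C ((a :: v) ++ [a]) * wgt C (a :: w'))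
        ≤ wgt C (u ++ [a]) * (1 * wgt C (a :: w')) := by
          exact mul_le_mul_right (mul_le_mul_left hcyc _) _
      _ = wgt C (u ++ [a]) * wgt C (a :: w') := by rw [one_mul]
  -- P' is a path from i to j of shorter length
  have hlast' : P'.getLast? = some j := by
    have h1 : P.getLast? = some j := by rw [hP]; exact hlast
    rw [hPdec] at h1
    rw [List.getLast?_append_cons] at h1
    rw [show a :: (v ++ (a :: w')) = (a :: v) ++ (a :: w') by simp, List.getLast?_append_cons] at h1
    rw [hP', List.getLast?_append_cons]
    exact h1
  have hlen' : P'.length < P.length := by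
    rw [hP', hPdec]
    simp
  -- P' starts with i
  obtain ⟨l', hl'⟩ : ∃ l', P' = i :: l' := by
    cases u with
    | nil =>
      have : a = i := by
        have := hPdec
        rw [hP] at this
        simp at this
        exact this.1.symm
      exact ⟨w', by rw [hP', this]; rfl⟩
    | cons x u' =>
      have : x = i := by
        have := hPdec
        rw [hP] at this
        simp at this
        exact this.1.symm
      exact ⟨u' ++ (a :: w'), by rw [hP', this]; rfl⟩
  have hK' : l'.length < K := by
    have : P'.length = l'.length + 1 := by rw [hl']; rfl
    omega
  calc tpow C K i j ≤ wgt C P := hle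
    _ ≤ wgt C P' := hwgt'
    _ ≤ tpow C l'.length i j := by
        rw [hl'] at hlast' ⊢
        exact wgt_le_tpow C l' i j hlast'
    _ ≤ _ := ih l'.length hK' i j

end Aux5
section Aux6
variable {n : ℕ}

lemma fobj_le_iff {M : TMat n} {x : Fin n → ℝ≥0} {t : ℝ≥0} (hx : ∀ i, 0 < x i) :
    fobj M x ≤ t ↔ ∀ i j, M i j * x j ≤ t * x i := by
  rw [fobj, Finset.sup_le_iff]
  constructor
  · intro h i j
    have := h (i, j) (Finset.mem_univ _)
    exact (div_le_iff₀ (hx i)).mp this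
  · intro h p _
    rw [div_le_iff₀ (hx p.1)]
    exact h p.1 p.2

lemma entry_le_fobj {M : TMat n} {x : Fin n → ℝ≥0} (hx : ∀ i, 0 < x i) (i j : Fin n) :
    M i j * x j ≤ fobj M x * x i := by
  have h : M i j * x j / x i ≤ fobj M x :=
    Finset.le_sup (f := fun p : Fin n × Fin n => M p.1 p.2 * x p.2 / x p.1)
      (Finset.mem_univ (i, j))
  exact (div_le_iff₀ (hx i)).mp h

lemma tpow_entry_le_fobj {M : TMat n} {x : Fin n → ℝ≥0} (hx : ∀ i, 0 < x i) :
    ∀ (k : ℕ) (i j : Fin n), tpow M k i j * x j ≤ fobj M x ^ k * x i := by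
  intro k
  induction k with
  | zero =>
    intro i j
    by_cases h : i = j <;> simp [tpow, tId, h]
  | succ k ih =>
    intro i j
    have hd : tpow M (k+1) i j = Finset.univ.sup (fun l => M i l * tpow M k l j) := rfl
    rw [hd, NNReal.finset_sup_mul]
    apply Finset.sup_le
    intro l _
    calc M i l * tpow M k l j * x j = M i l * (tpow M k l j * x j) := mul_assoc _ _ _
      _ ≤ M i l * (fobj M x ^ k * x l) := mul_le_mul_right (ih l j) _
      _ = fobj M x ^ k * (M i l * x l) := by ring
      _ ≤ fobj M x ^ k * (fobj M x * x i) := mul_le_mul_right (entry_le_fobj hx i l) _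
      _ = fobj M x ^ (k+1) * x i := by ring

lemma specRad_le_fobj {M : TMat n} {x : Fin n → ℝ≥0} (hx : ∀ i, 0 < x i) :
    specRad M ≤ fobj M x := by
  rw [specRad]
  apply Finset.sup_le
  intro k hk
  rw [Finset.mem_Icc] at hk
  have hk0 : (k : ℝ) ≠ 0 := Nat.cast_ne_zero.mpr (by omega)
  have htr : ttr (tpow M k) ≤ fobj M x ^ k := by
    apply Finset.sup_le
    intro i _
    have := tpow_entry_le_fobj (M := M) hx k i i
    exact le_of_mul_le_mul_right this (hx i)
  calc ttr (tpow M k) ^ ((1:ℝ)/k) ≤ (fobj M x ^ k) ^ ((1:ℝ)/k) :=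
        NNReal.rpow_le_rpow htr (by positivity)
    _ = fobj M x := by
        rw [← NNReal.rpow_natCast (fobj M x) k, ← NNReal.rpow_mul]
        rw [mul_one_div, div_self hk0, NNReal.rpow_one]

lemma ttr_tpow_le_pow {M : TMat n} (k : ℕ) (hk1 : 1 ≤ k) (hkn : k ≤ n) :
    ttr (tpow M k) ≤ specRad M ^ k := by
  have hk0 : (k : ℝ) ≠ 0 := Nat.cast_ne_zero.mpr (by omega)
  have h : ttr (tpow M k) ^ ((1:ℝ)/k) ≤ specRad M :=
    Finset.le_sup (f := fun k => ttr (tpow M k) ^ ((1:ℝ)/k))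
      (Finset.mem_Icc.mpr ⟨hk1, hkn⟩)
  calc ttr (tpow M k) = (ttr (tpow M k) ^ ((1:ℝ)/k)) ^ (k:ℝ) := by
        rw [← NNReal.rpow_mul, one_div, inv_mul_cancel₀ hk0, NNReal.rpow_one]
    _ ≤ specRad M ^ (k:ℝ) := NNReal.rpow_le_rpow h (by positivity)
    _ = specRad M ^ k := NNReal.rpow_natCast _ _

lemma rkm_le_pow {A B : TMat n} (hmu : specRad B ≠ 0)
    (hH : Hfun0 A B (specRad B) ≤ specRad A) :
    ∀ j m, 1 ≤ j → 1 ≤ m → j + m ≤ n →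
      rkm A B j m ≤ specRad A ^ m * specRad B ^ j := by
  intro j m hj1 hm1 hjm
  set lam := specRad A
  set mu := specRad B
  have hm0 : (m : ℝ) ≠ 0 := Nat.cast_ne_zero.mpr (by omega)
  have h1 : rkm A B j m ^ ((1:ℝ)/m) * mu ^ (-(j:ℝ)/m) ≤ lam := by
    refine le_trans ?_ hH
    refine le_trans ?_ (Finset.le_sup (f := fun k => (Finset.Icc 1 (n-k)).sup
      fun m => rkm A B k m ^ ((1:ℝ)/m) * mu ^ (-(k:ℝ)/m))
      (Finset.mem_Icc.mpr ⟨hj1, by omega⟩))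
    exact Finset.le_sup (f := fun m => rkm A B j m ^ ((1:ℝ)/m) * mu ^ (-(j:ℝ)/m))
      (Finset.mem_Icc.mpr ⟨hm1, by omega⟩)
  have hpow_ne : mu ^ ((j:ℝ)/m) ≠ 0 := by
    rw [Ne, NNReal.rpow_eq_zero_iff]
    push_neg
    intro h; exact absurd h hmu
  have step1 : rkm A B j m ^ ((1:ℝ)/m) ≤ lam * mu ^ ((j:ℝ)/m) := by
    rw [neg_div, NNReal.rpow_neg, ← div_eq_mul_inv] at h1
    exact (div_le_iff₀ (pos_iff_ne_zero.mpr hpow_ne)).mp h1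
  calc rkm A B j m = (rkm A B j m ^ ((1:ℝ)/m)) ^ (m:ℝ) := by
        rw [← NNReal.rpow_mul, one_div, inv_mul_cancel₀ hm0, NNReal.rpow_one]
    _ ≤ (lam * mu ^ ((j:ℝ)/m)) ^ (m:ℝ) := NNReal.rpow_le_rpow step1 (by positivity)
    _ = lam ^ (m:ℝ) * (mu ^ ((j:ℝ)/m)) ^ (m:ℝ) := NNReal.mul_rpow
    _ = lam ^ m * mu ^ j := by
        rw [NNReal.rpow_natCast, ← NNReal.rpow_mul, div_mul_cancel₀ _ hm0,
          NNReal.rpow_natCast]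

end Aux6
/-- Unconstrained case with H(μ) ≤ λ: (i) every positive x satisfies f_A(x) ≥ λ and
f_B(x) ≥ μ; (ii) some positive x attains both; consequently the Pareto frontier of the
unconstrained bi-objective problem is the single point (λ, μ). -/
theorem stmt17 {n : ℕ} (A B : TMat n)
    (hlam : 0 < specRad A) (hmu : 0 < specRad B)
    (hH : Hfun0 A B (specRad B) ≤ specRad A) :
    (∀ x : Fin n → ℝ≥0, (∀ i, 0 < x i) →
        specRad A ≤ fobj A x ∧ specRad B ≤ fobj B x) ∧
    (∃ x : Fin n → ℝ≥0, (∀ i, 0 < x i) ∧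
        fobj A x = specRad A ∧ fobj B x = specRad B) ∧
    {p | ParetoMin (V0 A B) p} = {(specRad A, specRad B)} := by
  have hn : 0 < n := by
    rcases Nat.eq_zero_or_pos n with h | h
    · exfalso
      subst h
      rw [specRad, show Finset.Icc 1 0 = ∅ from Finset.Icc_eq_empty (by omega)] at hlam
      simp at hlam
    · exact h
  set lam := specRad A with hlamdef
  set mu := specRad B with hmudef
  -- part (i)
  have part1 : ∀ x : Fin n → ℝ≥0, (∀ i, 0 < x i) →
      lam ≤ fobj A x ∧ mu ≤ fobj B x :=
    fun x hx => ⟨specRad_le_fobj hx, specRad_le_fobj hx⟩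
  -- construction of the optimal vector
  set C : TMat n := tadd (tsmul lam⁻¹ A) (tsmul mu⁻¹ B) with hC
  have htrC : ∀ k, 1 ≤ k → k ≤ n → ttr (tpow C k) ≤ 1 := by
    apply traceC_le_one A B lam mu hlam.ne' hmu.ne'
    · exact fun k hk1 hkn => ttr_tpow_le_pow k hk1 hkn
    · exact fun k hk1 hkn => ttr_tpow_le_pow k hk1 hkn
    · exact rkm_le_pow hmu.ne' hH
  set x : Fin n → ℝ≥0 := fun i => Finset.univ.sup fun l => tstar C i l with hxdef
  have hxpos : ∀ i, 0 < x i := by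
    intro i
    have h1 : (1 : ℝ≥0) = tpow C 0 i i := by simp [tpow, tId]
    have h2 : tpow C 0 i i ≤ tstar C i i :=
      Finset.le_sup (f := fun k => tpow C k i i) (Finset.mem_range.mpr hn)
    have h3 : tstar C i i ≤ x i :=
      Finset.le_sup (f := fun l => tstar C i l) (Finset.mem_univ i)
    calc (0:ℝ≥0) < 1 := one_pos
      _ = tpow C 0 i i := h1
      _ ≤ x i := h2.trans h3
  have hCx : ∀ i j, C i j * x j ≤ x i := by
    intro i j
    rw [hxdef]
    show C i j * Finset.univ.sup (fun l => tstar C j l) ≤ _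
    rw [NNReal.mul_finset_sup]
    apply Finset.sup_le
    intro l _
    have hstar : tstar C j l = (Finset.range n).sup fun k => tpow C k j l := rfl
    rw [hstar, NNReal.mul_finset_sup]
    apply Finset.sup_le
    intro k _
    calc C i j * tpow C k j l ≤ tpow C (k+1) i l := entry_mul_le _ _ _ _ _
      _ ≤ (Finset.range n).sup fun k' => tpow C k' i l := collapse C hn htrC (k+1) i l
      _ = tstar C i l := rfl
      _ ≤ Finset.univ.sup fun l => tstar C i l :=
          Finset.le_sup (f := fun l => tstar C i l) (Finset.mem_univ l)
  have hfa : fobj A x = lam := by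
    apply le_antisymm
    · rw [fobj_le_iff hxpos]
      intro i j
      have h2 : lam⁻¹ * A i j ≤ C i j := le_max_left _ _
      have h3 : A i j * x j / lam ≤ x i := by
        have he : A i j * x j / lam = (lam⁻¹ * A i j) * x j := by
          rw [div_eq_mul_inv]; ring
        rw [he]
        exact le_trans (mul_le_mul_left h2 _) (hCx i j)
      calc A i j * x j ≤ x i * lam := (div_le_iff₀ hlam).mp h3
        _ = lam * x i := mul_comm _ _
    · exact (part1 x hxpos).1
  have hfb : fobj B x = mu := by
    apply le_antisymm
    · rw [fobj_le_iff hxpos]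
      intro i j
      have h2 : mu⁻¹ * B i j ≤ C i j := le_max_right _ _
      have h3 : B i j * x j / mu ≤ x i := by
        have he : B i j * x j / mu = (mu⁻¹ * B i j) * x j := by
          rw [div_eq_mul_inv]; ring
        rw [he]
        exact le_trans (mul_le_mul_left h2 _) (hCx i j)
      calc B i j * x j ≤ x i * mu := (div_le_iff₀ hmu).mp h3
        _ = mu * x i := mul_comm _ _
    · exact (part1 x hxpos).2
  refine ⟨part1, ⟨x, hxpos, hfa, hfb⟩, ?_⟩
  have hmemV : ((lam, mu) : ℝ≥0 × ℝ≥0) ∈ V0 A B := ⟨x, hxpos, by rw [hfa, hfb]⟩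
  ext p
  simp only [Set.mem_setOf_eq, Set.mem_singleton_iff]
  constructor
  · rintro ⟨hpV, hnd⟩
    obtain ⟨y, hy, hpy⟩ := hpV
    have h1 : lam ≤ p.1 := by rw [hpy]; exact (part1 y hy).1
    have h2 : mu ≤ p.2 := by rw [hpy]; exact (part1 y hy).2
    by_contra hne
    exact hnd ⟨(lam, mu), hmemV, h1, h2, fun h => hne (h ▸ rfl)⟩
  · rintro rfl
    refine ⟨hmemV, ?_⟩
    rintro ⟨q, hqV, hq1, hq2, hqne⟩
    obtain ⟨y, hy, hqy⟩ := hqV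
    have h1 : lam ≤ q.1 := by rw [hqy]; exact (part1 y hy).1
    have h2 : mu ≤ q.2 := by rw [hqy]; exact (part1 y hy).2
    exact hqne (Prod.ext (le_antisymm hq1 h1) (le_antisymm hq2 h2))
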